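/- Strict convexity and unique minimizer of the full sequential cost in the linear case: let Q_x, R_y, Q_θ be positive definite real matrices of sizes d_x×d_x, d_y×d_y, d_θ×d_θ respectively, let F_x ∈ ℝ^{d_x×d_x}, F_θ ∈ ℝ^{d_x×d_θ}, H ∈ ℝ^{d_y×d_x}, fix initial values x₀ ∈ ℝ^{d_x}, θ₀ ∈ ℝ^{d_θ} and measurements y₁, …, y_N ∈ ℝ^{d_y}, and define L_N(x₁, …, x_N, θ₁, …, θ_N) = (1/2)·Σ_{i=1}^{N} [ (x_i − F_x x_{i−1} − F_θ θ_{i−1})ᵀ Q_x⁻¹ (x_i − F_x x_{i−1} − F_θ θ_{i−1}) + (y_i − H x_i)ᵀ R_y⁻¹ (y_i − H x_i) + (θ_i − θ_{i−1})ᵀ Q_θ⁻¹ (θ_i − θ_{i−1}) ]. Then L_N is a strictly convex function of (x₁, …, x_N, θ₁, …, θ_N) ∈ (ℝ^{d_x})^N × (ℝ^{d_θ})^N and possesses a unique global minimizer. -/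

import Mathlib

open Matrix

private lemma cons_split {n : ℕ} {α : Type*} [AddCommMonoid α] (a : α) (f : Fin n → α) :
    (Fin.cons a f : Fin (n+1) → α)
      = (Fin.cons 0 f : Fin (n+1) → α) + (Fin.cons a (0 : Fin n → α) : Fin (n+1) → α) := by
  funext j
  refine Fin.cases ?_ ?_ j <;> simp

private lemma cons_zero_zero {n : ℕ} {α : Type*} [Zero α] :
    (Fin.cons 0 (0 : Fin n → α) : Fin (n+1) → α) = 0 := by
  funext j
  refine Fin.cases ?_ ?_ j <;> simp

private lemma cons_zero_add {n : ℕ} {α : Type*} [AddCommMonoid α] (f g : Fin n → α) :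
    (Fin.cons 0 (f + g) : Fin (n+1) → α)
      = (Fin.cons 0 f : Fin (n+1) → α) + (Fin.cons 0 g : Fin (n+1) → α) := by
  funext j
  refine Fin.cases ?_ ?_ j <;> simp

private lemma cons_zero_smul {n : ℕ} {α : Type*} [AddCommMonoid α] [Module ℝ α]
    (t : ℝ) (f : Fin n → α) :
    (Fin.cons 0 (t • f) : Fin (n+1) → α) = t • (Fin.cons 0 f : Fin (n+1) → α) := by
  funext j
  refine Fin.cases ?_ ?_ j <;> simp

private lemma dot_nonneg {d : ℕ} {P : Matrix (Fin d) (Fin d) ℝ} (hP : P.PosSemidef)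
    (v : Fin d → ℝ) : 0 ≤ v ⬝ᵥ P *ᵥ v := by
  simpa using hP.dotProduct_mulVec_nonneg v

private lemma dot_pos {d : ℕ} {P : Matrix (Fin d) (Fin d) ℝ} (hP : P.PosDef)
    {v : Fin d → ℝ} (hv : v ≠ 0) : 0 < v ⬝ᵥ P *ᵥ v := by
  simpa using hP.dotProduct_mulVec_pos hv

private lemma dot_symm {d : ℕ} {P : Matrix (Fin d) (Fin d) ℝ} (hP : Pᵀ = P)
    (a b : Fin d → ℝ) : a ⬝ᵥ P *ᵥ b = b ⬝ᵥ P *ᵥ a := by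
  rw [dotProduct_mulVec, ← mulVec_transpose, hP, dotProduct_comm]

/-- The block bilinear form on the space of residuals. -/
private noncomputable def Bmap {dx dy dθ N : ℕ}
    (P1 : Matrix (Fin dx) (Fin dx) ℝ) (P2 : Matrix (Fin dy) (Fin dy) ℝ)
    (P3 : Matrix (Fin dθ) (Fin dθ) ℝ) :
    ((Fin N → Fin dx → ℝ) × (Fin N → Fin dy → ℝ) × (Fin N → Fin dθ → ℝ)) →ₗ[ℝ]
      ((Fin N → Fin dx → ℝ) × (Fin N → Fin dy → ℝ) × (Fin N → Fin dθ → ℝ)) →ₗ[ℝ] ℝ :=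
  LinearMap.mk₂ ℝ
    (fun u v => (∑ i, u.1 i ⬝ᵥ P1 *ᵥ v.1 i) + (∑ i, u.2.1 i ⬝ᵥ P2 *ᵥ v.2.1 i)
      + (∑ i, u.2.2 i ⬝ᵥ P3 *ᵥ v.2.2 i))
    (by
      intro m m' n
      simp [add_dotProduct, Finset.sum_add_distrib]
      try ring)
    (by
      intro c m n
      simp [smul_dotProduct, smul_eq_mul, Finset.mul_sum, mul_add])
    (by
      intro m n n'
      simp [dotProduct_add, mulVec_add, Finset.sum_add_distrib]
      try ring)
    (by
      intro c m n
      simp [dotProduct_smul, mulVec_smul, smul_eq_mul, Finset.mul_sum, mul_add])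

/-- The linear part of the residual map. -/
private noncomputable def Amap {dx dy dθ N : ℕ}
    (Fx : Matrix (Fin dx) (Fin dx) ℝ) (Fθ : Matrix (Fin dx) (Fin dθ) ℝ)
    (H : Matrix (Fin dy) (Fin dx) ℝ) :
    ((Fin N → Fin dx → ℝ) × (Fin N → Fin dθ → ℝ)) →ₗ[ℝ]
      ((Fin N → Fin dx → ℝ) × (Fin N → Fin dy → ℝ) × (Fin N → Fin dθ → ℝ)) where
  toFun z :=
    (fun i => z.1 i - Fx *ᵥ (Fin.cons 0 z.1 : Fin (N+1) → Fin dx → ℝ) i.castSucc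
        - Fθ *ᵥ (Fin.cons 0 z.2 : Fin (N+1) → Fin dθ → ℝ) i.castSucc,
     fun i => -(H *ᵥ z.1 i),
     fun i => z.2 i - (Fin.cons 0 z.2 : Fin (N+1) → Fin dθ → ℝ) i.castSucc)
  map_add' z w := by
    refine Prod.ext ?_ (Prod.ext ?_ ?_) <;> funext i
    · simp only [Prod.fst_add, Prod.snd_add, Pi.add_apply, cons_zero_add, mulVec_add]
      abel
    · simp only [Prod.fst_add, Prod.snd_add, Pi.add_apply, mulVec_add]
      abel
    · simp only [Prod.fst_add, Prod.snd_add, Pi.add_apply, cons_zero_add]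
      abel
  map_smul' t z := by
    refine Prod.ext ?_ (Prod.ext ?_ ?_) <;> funext i
    · simp only [RingHom.id_apply, Prod.smul_fst, Prod.smul_snd, Pi.smul_apply,
        cons_zero_smul, mulVec_smul, smul_sub]
    · simp only [RingHom.id_apply, Prod.smul_fst, Prod.smul_snd, Pi.smul_apply,
        mulVec_smul, smul_neg]
    · simp only [RingHom.id_apply, Prod.smul_fst, Prod.smul_snd, Pi.smul_apply,
        cons_zero_smul, smul_sub]

/-- The constant part of the residual map. -/
private noncomputable def cvec {dx dy dθ N : ℕ}
    (Fx : Matrix (Fin dx) (Fin dx) ℝ) (Fθ : Matrix (Fin dx) (Fin dθ) ℝ)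
    (x₀ : Fin dx → ℝ) (θ₀ : Fin dθ → ℝ) (y : Fin N → Fin dy → ℝ) :
    (Fin N → Fin dx → ℝ) × (Fin N → Fin dy → ℝ) × (Fin N → Fin dθ → ℝ) :=
  (fun i => -(Fx *ᵥ (Fin.cons x₀ (0 : Fin N → Fin dx → ℝ) : Fin (N+1) → Fin dx → ℝ) i.castSucc)
      - Fθ *ᵥ (Fin.cons θ₀ (0 : Fin N → Fin dθ → ℝ) : Fin (N+1) → Fin dθ → ℝ) i.castSucc,
   fun i => y i,
   fun i => -((Fin.cons θ₀ (0 : Fin N → Fin dθ → ℝ) : Fin (N+1) → Fin dθ → ℝ) i.castSucc))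

/-- Abstract fact: a quadratic function `z ↦ ½·B(Az+c, Az+c)` built from a positive
definite symmetric bilinear form `B` and an injective linear map `A` on a
finite-dimensional space is strictly convex and has a unique global minimizer. -/
private theorem aux_quad {E F : Type*} [AddCommGroup E] [Module ℝ E] [FiniteDimensional ℝ E]
    [AddCommGroup F] [Module ℝ F]
    (B : F →ₗ[ℝ] F →ₗ[ℝ] ℝ) (hsym : ∀ u v, B u v = B v u)
    (hpos : ∀ u, u ≠ 0 → 0 < B u u)
    (A : E →ₗ[ℝ] F) (hA : Function.Injective A) (c : F)
    (f : E → ℝ) (hf : ∀ z, f z = (1/2) * B (A z + c) (A z + c)) :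
    StrictConvexOn ℝ Set.univ f ∧ ∃! z, ∀ w, f z ≤ f w := by
  have expand : ∀ z v : E, f (z + v) = f z + B (A z + c) (A v) + (1/2) * B (A v) (A v) := by
    intro z v
    simp only [hf, map_add, LinearMap.add_apply]
    linarith [hsym (A v) (A z), hsym (A v) c]
  have key : ∀ (z w : E) (t s : ℝ), t + s = 1 →
      f (t • z + s • w) = t * f z + s * f w - t*s*((1/2) * B (A (z - w)) (A (z - w))) := by
    intro z w t s hts
    have hs' : s = 1 - t := by linarith
    subst hs'
    have e1 : t • z + (1-t) • w = w + t • (z - w) := by module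
    rw [e1]
    have e2 := expand w (t • (z - w))
    have e3 := expand w (z - w)
    rw [show w + (z - w) = z by abel] at e3
    simp only [_root_.map_smul, LinearMap.smul_apply, LinearMap.map_smul, smul_eq_mul] at e2
    linear_combination e2 - t * e3
  have Bnn : ∀ u, 0 ≤ B u u := by
    intro u
    rcases eq_or_ne u 0 with h | h
    · simp [h]
    · exact (hpos u h).le
  have hAne : ∀ v : E, v ≠ 0 → A v ≠ 0 := by
    intro v hv h0
    exact hv (hA (by rw [h0, map_zero]))
  have sc : StrictConvexOn ℝ Set.univ f := by
    refine ⟨convex_univ, fun z _ w hw hzw t s ht hs hts => ?_⟩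
    have hk := key z w t s hts
    have hp : 0 < B (A (z - w)) (A (z - w)) := hpos _ (hAne _ (sub_ne_zero.mpr hzw))
    rw [smul_eq_mul, smul_eq_mul, hk]
    nlinarith [mul_pos ht hs]
  refine ⟨sc, ?_⟩
  set T : E →ₗ[ℝ] Module.Dual ℝ E := B.compl₁₂ A A with hT
  have hTinj : Function.Injective T := by
    rw [← LinearMap.ker_eq_bot, LinearMap.ker_eq_bot']
    intro m hm
    by_contra hm0
    have h0 : B (A m) (A m) = 0 := by
      have := LinearMap.congr_fun hm m
      simpa [hT, LinearMap.compl₁₂_apply] using this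
    exact absurd h0 (ne_of_gt (hpos _ (hAne _ hm0)))
  have hTsurj : Function.Surjective T :=
    (LinearMap.injective_iff_surjective_of_finrank_eq_finrank
      (Subspace.dual_finrank_eq).symm).mp hTinj
  obtain ⟨zs, hzs⟩ := hTsurj (-((B c).comp A))
  have horth : ∀ v : E, B (A zs + c) (A v) = 0 := by
    intro v
    have h := LinearMap.congr_fun hzs v
    simp only [hT, LinearMap.compl₁₂_apply, LinearMap.neg_apply, LinearMap.comp_apply] at h
    simp only [map_add, LinearMap.add_apply]
    linarith
  have hdiff : ∀ w : E, f w = f zs + (1/2) * B (A (w - zs)) (A (w - zs)) := by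
    intro w
    have e := expand zs (w - zs)
    rw [show zs + (w - zs) = w by abel] at e
    rw [e, horth]
    ring
  refine ⟨zs, fun w => ?_, fun z' hz' => ?_⟩
  · rw [hdiff w]
    linarith [Bnn (A (w - zs))]
  · have h1 : f z' = f zs := le_antisymm (hz' zs)
      (by rw [hdiff z']; linarith [Bnn (A (z' - zs))])
    have h2 : B (A (z' - zs)) (A (z' - zs)) = 0 := by
      have := hdiff z'
      rw [h1] at this
      linarith
    by_contra hne
    exact absurd h2 (ne_of_gt (hpos _ (hAne _ (sub_ne_zero.mpr hne))))

/-- Strict convexity and unique global minimizer of the full sequential cost (9) in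
the linear case `f_o(x,θ) = Fx·x + Fθ·θ`, `h(x) = H·x`, with fixed initial values
`x₀, θ₀`. Here `Xp = Fin.cons x₀ X : Fin (N+1) → _` is the state trajectory
prepended with the initial state, so `Xp i.succ = xᵢ₊₁` and `Xp i.castSucc = xᵢ`,
and similarly for the parameters. -/
theorem stmt_13 {dx dy dθ N : ℕ}
    (Qx : Matrix (Fin dx) (Fin dx) ℝ) (Ry : Matrix (Fin dy) (Fin dy) ℝ)
    (Qθ : Matrix (Fin dθ) (Fin dθ) ℝ)
    (hQx : Qx.PosDef) (hRy : Ry.PosDef) (hQθ : Qθ.PosDef)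
    (Fx : Matrix (Fin dx) (Fin dx) ℝ) (Fθ : Matrix (Fin dx) (Fin dθ) ℝ)
    (H : Matrix (Fin dy) (Fin dx) ℝ)
    (x₀ : Fin dx → ℝ) (θ₀ : Fin dθ → ℝ) (y : Fin N → Fin dy → ℝ)
    (L : ((Fin N → Fin dx → ℝ) × (Fin N → Fin dθ → ℝ)) → ℝ)
    (hL : ∀ (X : Fin N → Fin dx → ℝ) (Θ : Fin N → Fin dθ → ℝ),
      L (X, Θ) = (1 / 2) * ∑ i : Fin N,
        let Xp : Fin (N + 1) → Fin dx → ℝ := Fin.cons x₀ X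
        let Θp : Fin (N + 1) → Fin dθ → ℝ := Fin.cons θ₀ Θ
        (Xp i.succ - Fx *ᵥ Xp i.castSucc - Fθ *ᵥ Θp i.castSucc) ⬝ᵥ
          (Qx⁻¹ *ᵥ (Xp i.succ - Fx *ᵥ Xp i.castSucc - Fθ *ᵥ Θp i.castSucc))
        + (y i - H *ᵥ Xp i.succ) ⬝ᵥ (Ry⁻¹ *ᵥ (y i - H *ᵥ Xp i.succ))
        + (Θp i.succ - Θp i.castSucc) ⬝ᵥ (Qθ⁻¹ *ᵥ (Θp i.succ - Θp i.castSucc))) :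
    StrictConvexOn ℝ Set.univ L ∧ ∃! z, ∀ w, L z ≤ L w := by
  have hP1 : (Qx⁻¹)ᵀ = Qx⁻¹ := by
    rw [← Matrix.conjTranspose_eq_transpose_of_trivial]; exact hQx.inv.isHermitian
  have hP2 : (Ry⁻¹)ᵀ = Ry⁻¹ := by
    rw [← Matrix.conjTranspose_eq_transpose_of_trivial]; exact hRy.inv.isHermitian
  have hP3 : (Qθ⁻¹)ᵀ = Qθ⁻¹ := by
    rw [← Matrix.conjTranspose_eq_transpose_of_trivial]; exact hQθ.inv.isHermitian
  have hsym : ∀ u v, Bmap (N := N) Qx⁻¹ Ry⁻¹ Qθ⁻¹ u v = Bmap Qx⁻¹ Ry⁻¹ Qθ⁻¹ v u := by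
    intro u v
    simp only [Bmap, LinearMap.mk₂_apply]
    rw [Finset.sum_congr rfl fun i _ => dot_symm hP1 (u.1 i) (v.1 i),
        Finset.sum_congr rfl fun i _ => dot_symm hP2 (u.2.1 i) (v.2.1 i),
        Finset.sum_congr rfl fun i _ => dot_symm hP3 (u.2.2 i) (v.2.2 i)]
  have hpos : ∀ u : (Fin N → Fin dx → ℝ) × (Fin N → Fin dy → ℝ) × (Fin N → Fin dθ → ℝ),
      u ≠ 0 → 0 < Bmap Qx⁻¹ Ry⁻¹ Qθ⁻¹ u u := by
    rintro ⟨a, b, c⟩ hu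
    simp only [Bmap, LinearMap.mk₂_apply]
    have ha' : 0 ≤ ∑ i, a i ⬝ᵥ Qx⁻¹ *ᵥ a i :=
      Finset.sum_nonneg fun i _ => dot_nonneg hQx.inv.posSemidef _
    have hb' : 0 ≤ ∑ i, b i ⬝ᵥ Ry⁻¹ *ᵥ b i :=
      Finset.sum_nonneg fun i _ => dot_nonneg hRy.inv.posSemidef _
    have hc' : 0 ≤ ∑ i, c i ⬝ᵥ Qθ⁻¹ *ᵥ c i :=
      Finset.sum_nonneg fun i _ => dot_nonneg hQθ.inv.posSemidef _
    have hcomp : a ≠ 0 ∨ b ≠ 0 ∨ c ≠ 0 := by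
      by_contra hcon
      push_neg at hcon
      exact hu (by rw [hcon.1, hcon.2.1, hcon.2.2]; rfl)
    rcases hcomp with h | h | h
    · obtain ⟨i, hi⟩ := Function.ne_iff.mp h
      have hi' : a i ≠ 0 := by simpa using hi
      have := Finset.sum_pos' (fun j _ => dot_nonneg hQx.inv.posSemidef (a j))
        ⟨i, Finset.mem_univ i, dot_pos hQx.inv hi'⟩
      linarith
    · obtain ⟨i, hi⟩ := Function.ne_iff.mp h
      have hi' : b i ≠ 0 := by simpa using hi
      have := Finset.sum_pos' (fun j _ => dot_nonneg hRy.inv.posSemidef (b j))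
        ⟨i, Finset.mem_univ i, dot_pos hRy.inv hi'⟩
      linarith
    · obtain ⟨i, hi⟩ := Function.ne_iff.mp h
      have hi' : c i ≠ 0 := by simpa using hi
      have := Finset.sum_pos' (fun j _ => dot_nonneg hQθ.inv.posSemidef (c j))
        ⟨i, Finset.mem_univ i, dot_pos hQθ.inv hi'⟩
      linarith
  have hAinj : Function.Injective (Amap (dy := dy) (N := N) Fx Fθ H) := by
    rw [← LinearMap.ker_eq_bot, LinearMap.ker_eq_bot']
    rintro ⟨X, Θ⟩ hz
    have h1 : ∀ i : Fin N, X i - Fx *ᵥ (Fin.cons 0 X : Fin (N+1) → Fin dx → ℝ) i.castSucc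
        - Fθ *ᵥ (Fin.cons 0 Θ : Fin (N+1) → Fin dθ → ℝ) i.castSucc = 0 :=
      fun i => congrFun (congrArg Prod.fst hz) i
    have h3 : ∀ i : Fin N, Θ i - (Fin.cons 0 Θ : Fin (N+1) → Fin dθ → ℝ) i.castSucc = 0 :=
      fun i => congrFun (congrArg (fun p => p.2.2) hz) i
    have hΘ' : ∀ i : Fin (N+1), (Fin.cons 0 Θ : Fin (N+1) → Fin dθ → ℝ) i = 0 := by
      intro i
      induction i using Fin.induction with
      | zero => simp
      | succ i IH =>
        rw [Fin.cons_succ, sub_eq_zero.mp (h3 i), IH]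
    have hΘ0 : Θ = 0 := by
      funext i
      have := hΘ' i.succ
      rwa [Fin.cons_succ] at this
    have hX' : ∀ i : Fin (N+1), (Fin.cons 0 X : Fin (N+1) → Fin dx → ℝ) i = 0 := by
      intro i
      induction i using Fin.induction with
      | zero => simp
      | succ i IH =>
        have h := h1 i
        rw [hΘ0, _root_.cons_zero_zero, Pi.zero_apply, mulVec_zero, sub_zero, IH,
          mulVec_zero, sub_zero] at h
        rw [Fin.cons_succ, h]
    have hX0 : X = 0 := by
      funext i
      have := hX' i.succ
      rwa [Fin.cons_succ] at this
    rw [hX0, hΘ0]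
    rfl
  have hf : ∀ z : (Fin N → Fin dx → ℝ) × (Fin N → Fin dθ → ℝ),
      L z = (1/2) * Bmap Qx⁻¹ Ry⁻¹ Qθ⁻¹ (Amap Fx Fθ H z + cvec Fx Fθ x₀ θ₀ y)
        (Amap Fx Fθ H z + cvec Fx Fθ x₀ θ₀ y) := by
    rintro ⟨X, Θ⟩
    rw [hL X Θ]
    simp only [Fin.cons_succ, Bmap, LinearMap.mk₂_apply]
    rw [← Finset.sum_add_distrib, ← Finset.sum_add_distrib]
    congr 1
    refine Finset.sum_congr rfl fun i _ => ?_
    have e1 : (Amap Fx Fθ H (X, Θ) + cvec Fx Fθ x₀ θ₀ y).1 i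
        = X i - Fx *ᵥ (Fin.cons x₀ X : Fin (N+1) → Fin dx → ℝ) i.castSucc
          - Fθ *ᵥ (Fin.cons θ₀ Θ : Fin (N+1) → Fin dθ → ℝ) i.castSucc := by
      rw [cons_split x₀ X, cons_split θ₀ Θ]
      simp only [Amap, cvec, LinearMap.coe_mk, AddHom.coe_mk, Prod.fst_add, Pi.add_apply,
        mulVec_add]
      abel
    have e2 : (Amap Fx Fθ H (X, Θ) + cvec Fx Fθ x₀ θ₀ y).2.1 i = y i - H *ᵥ X i := by
      simp only [Amap, cvec, LinearMap.coe_mk, AddHom.coe_mk, Prod.snd_add, Prod.fst_add,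
        Pi.add_apply]
      abel
    have e3 : (Amap Fx Fθ H (X, Θ) + cvec Fx Fθ x₀ θ₀ y).2.2 i
        = Θ i - (Fin.cons θ₀ Θ : Fin (N+1) → Fin dθ → ℝ) i.castSucc := by
      rw [cons_split θ₀ Θ]
      simp only [Amap, cvec, LinearMap.coe_mk, AddHom.coe_mk, Prod.snd_add, Pi.add_apply]
      abel
    rw [e1, e2, e3]
  exact aux_quad (Bmap Qx⁻¹ Ry⁻¹ Qθ⁻¹) hsym hpos (Amap Fx Fθ H) hAinj
    (cvec Fx Fθ x₀ θ₀ y) L hf
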